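/- For all R1, R2 ∈ ℛ: R1 ≡_ORD R2 if and only if there exist a constant c > 0 and a function Φ : S → ℝ such that for all (s,a) ∈ S×A, ∑_{s'∈S} τ(s,a)(s')·R2(s,a,s') = ∑_{s'∈S} τ(s,a)(s')·(c·R1(s,a,s') + γ·Φ(s')) − Φ(s). (Equivalently: R2 is obtained from R1 by some composition, in any order, of positive linear scaling, potential shaping with discount γ, and S'-redistribution with respect to τ.) -/

import Mathlib

open scoped BigOperators

/-- A probability vector on a finite type. -/
def IsProbVec {X : Type} [Fintype X] (p : X → ℝ) : Prop :=
  (∀ x, 0 ≤ p x) ∧ ∑ x, p x = 1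

/-- A (stationary) policy: a probability vector over actions for each state. -/
def Policy (S A : Type) [Fintype A] : Type :=
  {p : S → A → ℝ // ∀ s, IsProbVec (p s)}

/-- The transition matrix `P_π` induced by a policy `π` under transition function `τ`. -/
noncomputable def Pmat {S A : Type} [Fintype S] [Fintype A]
    (τ : S → A → S → ℝ) (π : Policy S A) : Matrix S S ℝ :=
  Matrix.of fun s s' => ∑ a, π.1 s a * τ s a s'

/-- The state distribution `ι P_π^t` at time `t`. -/
noncomputable def stateDist {S A : Type} [Fintype S] [DecidableEq S] [Fintype A]
    (τ : S → A → S → ℝ) (ι : S → ℝ) (π : Policy S A) (t : ℕ) : S → ℝ :=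
  Matrix.vecMul ι (Pmat τ π ^ t)

/-- The expected one-step reward `r_{R,π}`. -/
noncomputable def rvec {S A : Type} [Fintype S] [Fintype A]
    (τ : S → A → S → ℝ) (R : S → A → S → ℝ) (π : Policy S A) (s : S) : ℝ :=
  ∑ a, π.1 s a * ∑ s', τ s a s' * R s a s'

/-- The policy evaluation function `J_R(π)`. -/
noncomputable def Jval {S A : Type} [Fintype S] [DecidableEq S] [Fintype A]
    (τ : S → A → S → ℝ) (ι : S → ℝ) (γ : ℝ) (R : S → A → S → ℝ)
    (π : Policy S A) : ℝ :=
  ∑' t : ℕ, γ ^ t * ∑ s, stateDist τ ι π t s * rvec τ R π s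

/-- Every state is reachable under `τ` and `ι`. -/
def AllReachable {S A : Type} [Fintype S] [DecidableEq S] [Fintype A]
    (τ : S → A → S → ℝ) (ι : S → ℝ) : Prop :=
  ∀ s : S, ∃ (π : Policy S A) (t : ℕ), 0 < stateDist τ ι π t s

/-- `π` is an optimal policy for `R`. -/
def IsOptimal {S A : Type} [Fintype S] [DecidableEq S] [Fintype A]
    (τ : S → A → S → ℝ) (ι : S → ℝ) (γ : ℝ) (R : S → A → S → ℝ)
    (π : Policy S A) : Prop :=
  ∀ π' : Policy S A, Jval τ ι γ R π' ≤ Jval τ ι γ R π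

/-- `R₁ ≡_OPT R₂`: the same policies are optimal for `R₁` and `R₂`. -/
def EquivOPT {S A : Type} [Fintype S] [DecidableEq S] [Fintype A]
    (τ : S → A → S → ℝ) (ι : S → ℝ) (γ : ℝ) (R₁ R₂ : S → A → S → ℝ) : Prop :=
  ∀ π : Policy S A, IsOptimal τ ι γ R₁ π ↔ IsOptimal τ ι γ R₂ π

/-- `R₁ ≡_ORD R₂`: `R₁` and `R₂` induce the same ordering of policies. -/
def EquivORD {S A : Type} [Fintype S] [DecidableEq S] [Fintype A]
    (τ : S → A → S → ℝ) (ι : S → ℝ) (γ : ℝ) (R₁ R₂ : S → A → S → ℝ) : Prop :=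
  ∀ π π' : Policy S A,
    (Jval τ ι γ R₁ π' < Jval τ ι γ R₁ π ↔ Jval τ ι γ R₂ π' < Jval τ ι γ R₂ π)

/-- `f` is `P`-admissible: `f R₁ = f R₂` implies `P R₁ R₂`. -/
def PAdmissible {R : Type*} {X : Type*} (P : R → R → Prop) (f : R → X) : Prop :=
  ∀ R₁ R₂ : R, f R₁ = f R₂ → P R₁ R₂

/-- `f` is `P`-robust to misspecification with `g`. -/
def PRobust {R : Type*} {X : Type*} (P : R → R → Prop) (f g : R → X) : Prop :=
  PAdmissible P f ∧ f ≠ g ∧ Set.range g ⊆ Set.range f ∧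
    ∀ R₁ R₂ : R, f R₁ = g R₂ → P R₁ R₂

section Aux
variable {S A : Type} [Fintype S] [DecidableEq S] [Fintype A] [Nonempty S] [Nonempty A]
variable {τ : S → A → S → ℝ} {ι : S → ℝ} {γ : ℝ}

lemma Pmat_nonneg (hτ : ∀ s a, IsProbVec (τ s a)) (π : Policy S A) (s s' : S) :
    0 ≤ Pmat τ π s s' := by
  apply Finset.sum_nonneg
  exact fun a _ => mul_nonneg ((π.2 s).1 a) ((hτ s a).1 s')

lemma Pmat_row_sum (hτ : ∀ s a, IsProbVec (τ s a)) (π : Policy S A) (s : S) :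
    ∑ s', Pmat τ π s s' = 1 := by
  have : ∑ s', Pmat τ π s s' = ∑ a, π.1 s a * ∑ s', τ s a s' := by
    simp only [Pmat, Matrix.of_apply, Finset.mul_sum]
    rw [Finset.sum_comm]
  rw [this]
  simp only [(fun a => (hτ s a).2 : ∀ a, ∑ s', τ s a s' = 1), mul_one]
  exact (π.2 s).2

lemma Pmat_pow_nonneg (hτ : ∀ s a, IsProbVec (τ s a)) (π : Policy S A) (t : ℕ) (s s' : S) :
    0 ≤ (Pmat τ π ^ t) s s' := by
  induction t generalizing s s' with
  | zero =>
    rw [pow_zero, Matrix.one_apply]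
    split <;> norm_num
  | succ t ih =>
    rw [pow_succ, Matrix.mul_apply]
    exact Finset.sum_nonneg fun x _ => mul_nonneg (ih s x) (Pmat_nonneg hτ π x s')

lemma Pmat_pow_row_sum (hτ : ∀ s a, IsProbVec (τ s a)) (π : Policy S A) (t : ℕ) (s : S) :
    ∑ s', (Pmat τ π ^ t) s s' = 1 := by
  induction t generalizing s with
  | zero => simp [Matrix.one_apply]
  | succ t ih =>
    rw [pow_succ]
    simp only [Matrix.mul_apply]
    rw [Finset.sum_comm]
    simp_rw [← Finset.mul_sum, Pmat_row_sum hτ π, mul_one]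
    exact ih s

lemma stateDist_nonneg (hτ : ∀ s a, IsProbVec (τ s a)) (hι : IsProbVec ι)
    (π : Policy S A) (t : ℕ) (s : S) : 0 ≤ stateDist τ ι π t s := by
  unfold stateDist Matrix.vecMul
  refine Finset.sum_nonneg fun x _ => mul_nonneg (hι.1 x) (Pmat_pow_nonneg hτ π t x s)

lemma stateDist_sum (hτ : ∀ s a, IsProbVec (τ s a)) (hι : IsProbVec ι)
    (π : Policy S A) (t : ℕ) : ∑ s, stateDist τ ι π t s = 1 := by
  unfold stateDist Matrix.vecMul
  simp only [dotProduct]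
  rw [Finset.sum_comm]
  simp_rw [← Finset.mul_sum, Pmat_pow_row_sum hτ π t, mul_one]
  exact hι.2

lemma stateDist_le_one (hτ : ∀ s a, IsProbVec (τ s a)) (hι : IsProbVec ι)
    (π : Policy S A) (t : ℕ) (s : S) : stateDist τ ι π t s ≤ 1 := by
  have h := stateDist_sum hτ hι π t
  calc stateDist τ ι π t s ≤ ∑ s', stateDist τ ι π t s' :=
        Finset.single_le_sum (fun s' _ => stateDist_nonneg hτ hι π t s') (Finset.mem_univ s)
    _ = 1 := h

lemma stateDist_zero (π : Policy S A) : stateDist τ ι π 0 = ι := by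
  simp [stateDist]

lemma stateDist_succ (π : Policy S A) (t : ℕ) (s : S) :
    stateDist τ ι π (t+1) s = ∑ s', stateDist τ ι π t s' * Pmat τ π s' s := by
  unfold stateDist
  rw [pow_succ, ← Matrix.vecMul_vecMul]
  rfl

lemma summable_geom_bound {u : ℕ → ℝ} (hγ0 : 0 < γ) (hγ1 : γ < 1) (C : ℝ)
    (h : ∀ t, |u t| ≤ C) : Summable (fun t => γ ^ t * u t) := by
  apply Summable.of_norm_bounded (g := fun t => γ ^ t * C)
  · exact (summable_geometric_of_lt_one hγ0.le hγ1).mul_right C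
  · intro t
    rw [Real.norm_eq_abs, abs_mul, abs_pow, abs_of_pos hγ0]
    exact mul_le_mul_of_nonneg_left (h t) (pow_nonneg hγ0.le t)

end Aux

set_option linter.unusedSectionVars false
section Aux2
variable {S A : Type} [Fintype S] [DecidableEq S] [Fintype A] [Nonempty S] [Nonempty A]
variable {τ : S → A → S → ℝ} {ι : S → ℝ} {γ : ℝ}

/-- state occupancy -/
noncomputable def socc (τ : S → A → S → ℝ) (ι : S → ℝ) (γ : ℝ) (π : Policy S A) (s : S) : ℝ :=
  ∑' t : ℕ, γ ^ t * stateDist τ ι π t s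

/-- state-action occupancy measure -/
noncomputable def occ (τ : S → A → S → ℝ) (ι : S → ℝ) (γ : ℝ) (π : Policy S A) (p : S × A) : ℝ :=
  socc τ ι γ π p.1 * π.1 p.1 p.2

/-- expected reward vector -/
noncomputable def qfun (τ : S → A → S → ℝ) (R : S → A → S → ℝ) (p : S × A) : ℝ :=
  ∑ s', τ p.1 p.2 s' * R p.1 p.2 s'

variable (hτ : ∀ s a, IsProbVec (τ s a)) (hι : IsProbVec ι) (hγ0 : 0 < γ) (hγ1 : γ < 1)
include hτ hι hγ0 hγ1

lemma summable_socc (π : Policy S A) (s : S) (w : ℝ) :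
    Summable (fun t => γ ^ t * (stateDist τ ι π t s * w)) := by
  apply summable_geom_bound hγ0 hγ1 |w|
  intro t
  rw [abs_mul, abs_of_nonneg (stateDist_nonneg hτ hι π t s)]
  have := stateDist_le_one hτ hι π t s
  nlinarith [abs_nonneg w]

lemma summable_socc' (π : Policy S A) (s : S) :
    Summable (fun t => γ ^ t * stateDist τ ι π t s) := by
  simpa using summable_socc hτ hι hγ0 hγ1 π s 1

lemma socc_nonneg (π : Policy S A) (s : S) : 0 ≤ socc τ ι γ π s :=
  tsum_nonneg fun t => mul_nonneg (pow_nonneg hγ0.le t) (stateDist_nonneg hτ hι π t s)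

lemma socc_pos (π : Policy S A) (t : ℕ) (s : S) (h : 0 < stateDist τ ι π t s) :
    0 < socc τ ι γ π s := by
  have h1 : 0 < γ ^ t * stateDist τ ι π t s := mul_pos (pow_pos hγ0 t) h
  have h2 : γ ^ t * stateDist τ ι π t s ≤ socc τ ι γ π s := by
    apply Summable.le_tsum (summable_socc' hτ hι hγ0 hγ1 π s) t
    intro j _
    exact mul_nonneg (pow_nonneg hγ0.le j) (stateDist_nonneg hτ hι π j s)
  linarith

lemma socc_flow (π : Policy S A) (s : S) :
    socc τ ι γ π s = ι s + γ * ∑ s', socc τ ι γ π s' * Pmat τ π s' s := by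
  have hsum : ∀ s', Summable (fun t => γ ^ t * (stateDist τ ι π t s' * Pmat τ π s' s)) :=
    fun s' => summable_socc hτ hι hγ0 hγ1 π s' _
  have h0 : socc τ ι γ π s
      = γ ^ 0 * stateDist τ ι π 0 s + ∑' t : ℕ, γ ^ (t+1) * stateDist τ ι π (t+1) s := by
    rw [socc, Summable.tsum_eq_zero_add (summable_socc' hτ hι hγ0 hγ1 π s)]
  rw [h0, pow_zero, one_mul, stateDist_zero]
  congr 1
  have : ∀ t : ℕ, γ ^ (t+1) * stateDist τ ι π (t+1) s
      = γ * ∑ s', γ ^ t * (stateDist τ ι π t s' * Pmat τ π s' s) := by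
    intro t
    rw [stateDist_succ, Finset.mul_sum, Finset.mul_sum]
    refine Finset.sum_congr rfl fun s' _ => by ring
  simp_rw [this]
  rw [tsum_mul_left]
  congr 1
  rw [Summable.tsum_finsetSum (fun s' _ => hsum s')]
  refine Finset.sum_congr rfl fun s' _ => ?_
  have h2 : ∀ t : ℕ, γ ^ t * (stateDist τ ι π t s' * Pmat τ π s' s)
      = (γ ^ t * stateDist τ ι π t s') * Pmat τ π s' s := fun t => by ring
  simp_rw [h2]
  exact tsum_mul_right

lemma occ_nonneg (π : Policy S A) (p : S × A) : 0 ≤ occ τ ι γ π p :=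
  mul_nonneg (socc_nonneg hτ hι hγ0 hγ1 π p.1) ((π.2 p.1).1 p.2)

lemma occ_sum_a (π : Policy S A) (s : S) : ∑ a, occ τ ι γ π (s, a) = socc τ ι γ π s := by
  have h : ∀ a, occ τ ι γ π (s, a) = socc τ ι γ π s * π.1 s a := fun a => rfl
  simp_rw [h]
  rw [← Finset.mul_sum, (π.2 s).2, mul_one]

lemma occ_flow (π : Policy S A) (s : S) :
    ∑ a, occ τ ι γ π (s, a) = ι s + γ * ∑ p : S × A, occ τ ι γ π p * τ p.1 p.2 s := by
  rw [occ_sum_a hτ hι hγ0 hγ1, socc_flow hτ hι hγ0 hγ1]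
  congr 1
  rw [show (∑ p : S × A, occ τ ι γ π p * τ p.1 p.2 s)
      = ∑ s', ∑ a, occ τ ι γ π (s', a) * τ s' a s from Fintype.sum_prod_type _]
  congr 1
  refine Finset.sum_congr rfl fun s' _ => ?_
  simp only [Pmat, Matrix.of_apply, Finset.mul_sum]
  refine Finset.sum_congr rfl fun a _ => ?_
  have h : occ τ ι γ π (s', a) = socc τ ι γ π s' * π.1 s' a := rfl
  rw [h]; ring

lemma Jval_eq_occ (R : S → A → S → ℝ) (π : Policy S A) :
    Jval τ ι γ R π = ∑ p : S × A, occ τ ι γ π p * qfun τ R p := by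
  unfold Jval
  have h1 : ∀ t : ℕ, γ ^ t * ∑ s, stateDist τ ι π t s * rvec τ R π s
      = ∑ s, γ ^ t * (stateDist τ ι π t s * rvec τ R π s) := by
    intro t; rw [Finset.mul_sum]
  simp_rw [h1]
  rw [Summable.tsum_finsetSum (fun s _ => summable_socc hτ hι hγ0 hγ1 π s _)]
  rw [show (∑ p : S × A, occ τ ι γ π p * qfun τ R p)
      = ∑ s, ∑ a, occ τ ι γ π (s, a) * qfun τ R (s, a) from Fintype.sum_prod_type _]
  refine Finset.sum_congr rfl fun s _ => ?_
  have h2 : ∀ t : ℕ, γ ^ t * (stateDist τ ι π t s * rvec τ R π s)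
      = (γ ^ t * stateDist τ ι π t s) * rvec τ R π s := fun t => by ring
  simp_rw [h2]
  rw [tsum_mul_right]
  show socc τ ι γ π s * rvec τ R π s = _
  unfold rvec occ qfun
  rw [Finset.mul_sum]
  congr 1; funext a; ring

end Aux2

section Aux3
variable {S A : Type} [Fintype S] [DecidableEq S] [Fintype A] [Nonempty S] [Nonempty A]
variable {τ : S → A → S → ℝ} {ι : S → ℝ} {γ : ℝ}

lemma flow_unique (hγ0 : 0 < γ) (hγ1 : γ < 1)
    (P : Matrix S S ℝ) (hP0 : ∀ s s', 0 ≤ P s s') (hP1 : ∀ s, ∑ s', P s s' = 1)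
    (x y : S → ℝ) (hx : ∀ s, x s = ι s + γ * ∑ s', x s' * P s' s)
    (hy : ∀ s, y s = ι s + γ * ∑ s', y s' * P s' s) : x = y := by
  set z : S → ℝ := fun s => x s - y s with hzdef
  have hz : ∀ s, z s = γ * ∑ s', z s' * P s' s := by
    intro s
    have : ∀ s', z s' * P s' s = x s' * P s' s - y s' * P s' s := fun s' => by
      simp [hzdef]; ring
    simp_rw [this]
    rw [Finset.sum_sub_distrib]
    simp only [hzdef]
    rw [hx s, hy s]; ring
  have key : ∑ s, |z s| ≤ γ * ∑ s, |z s| := by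
    have step1 : ∀ s, |z s| ≤ γ * ∑ s', |z s'| * P s' s := by
      intro s
      rw [hz s, abs_mul, abs_of_pos hγ0]
      refine mul_le_mul_of_nonneg_left ?_ hγ0.le
      calc |∑ s', z s' * P s' s| ≤ ∑ s', |z s' * P s' s| := Finset.abs_sum_le_sum_abs _ _
        _ = ∑ s', |z s'| * P s' s := by
            refine Finset.sum_congr rfl fun s' _ => ?_
            rw [abs_mul, abs_of_nonneg (hP0 s' s)]
    calc ∑ s, |z s| ≤ ∑ s, γ * ∑ s', |z s'| * P s' s := Finset.sum_le_sum fun s _ => step1 s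
      _ = γ * ∑ s', |z s'| := by
          rw [← Finset.mul_sum]
          congr 1
          rw [Finset.sum_comm]
          simp_rw [← Finset.mul_sum, hP1, mul_one]
  have hN0 : 0 ≤ ∑ s, |z s| := Finset.sum_nonneg fun s _ => abs_nonneg _
  have hNz : ∑ s, |z s| = 0 := by nlinarith
  funext s
  have : |z s| = 0 := by
    have := (Finset.sum_eq_zero_iff_of_nonneg (fun s _ => abs_nonneg (z s))).mp hNz s
      (Finset.mem_univ s)
    exact this
  have : z s = 0 := abs_eq_zero.mp this
  have : x s - y s = 0 := this
  linarith

lemma socc_flow_eq (hτ : ∀ s a, IsProbVec (τ s a)) (hι : IsProbVec ι)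
    (hγ0 : 0 < γ) (hγ1 : γ < 1) (π : Policy S A) (x : S → ℝ)
    (hx : ∀ s, x s = ι s + γ * ∑ s', x s' * Pmat τ π s' s) :
    x = socc τ ι γ π :=
  flow_unique hγ0 hγ1 (Pmat τ π) (Pmat_nonneg hτ π) (Pmat_row_sum hτ π) x _
    hx (fun s => socc_flow hτ hι hγ0 hγ1 π s)

open Classical in
/-- Realization: every nonnegative solution of the flow equations is an occupancy measure. -/
lemma occ_realize (hτ : ∀ s a, IsProbVec (τ s a)) (hι : IsProbVec ι)
    (hγ0 : 0 < γ) (hγ1 : γ < 1) (m : S × A → ℝ) (hm0 : ∀ p, 0 ≤ m p)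
    (hflow : ∀ s, ∑ a, m (s, a) = ι s + γ * ∑ p : S × A, m p * τ p.1 p.2 s) :
    ∃ π : Policy S A, occ τ ι γ π = m := by
  set μ : S → ℝ := fun s => ∑ a, m (s, a) with hμdef
  have hcA : (0:ℝ) < (Fintype.card A : ℝ) := by
    have := Fintype.card_pos (α := A); positivity
  set pol : S → A → ℝ := fun s a => if 0 < μ s then m (s, a) / μ s else (Fintype.card A : ℝ)⁻¹
    with hpoldef
  have hμ0 : ∀ s, 0 ≤ μ s := fun s => Finset.sum_nonneg fun a _ => hm0 (s, a)
  have hprob : ∀ s, IsProbVec (pol s) := by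
    intro s
    constructor
    · intro a
      simp only [hpoldef]
      split
      · exact div_nonneg (hm0 (s, a)) (hμ0 s)
      · positivity
    · simp only [hpoldef]
      split
      · rw [← Finset.sum_div]
        rw [div_eq_one_iff_eq (by linarith [‹0 < μ s›] : μ s ≠ 0)]
      · simp [Finset.card_univ]
  set πm : Policy S A := ⟨pol, hprob⟩ with hπm
  have hm_eq : ∀ s a, m (s, a) = pol s a * μ s := by
    intro s a
    simp only [hpoldef]
    rcases lt_or_eq_of_le (hμ0 s) with h | h
    · rw [if_pos h, div_mul_cancel₀ _ (ne_of_gt h)]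
    · rw [if_neg (by rw [← h]; exact lt_irrefl 0)]
      have hma : m (s, a) = 0 := by
        have := (Finset.sum_eq_zero_iff_of_nonneg (fun a _ => hm0 (s, a))).mp h.symm a
          (Finset.mem_univ a)
        exact this
      rw [hma, ← h, mul_zero]
  have hμflow : ∀ s, μ s = ι s + γ * ∑ s', μ s' * Pmat τ πm s' s := by
    intro s
    rw [show μ s = ∑ a, m (s, a) from rfl, hflow s]
    congr 2
    rw [show (∑ p : S × A, m p * τ p.1 p.2 s)
        = ∑ s', ∑ a, m (s', a) * τ s' a s from Fintype.sum_prod_type _]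
    refine Finset.sum_congr rfl fun s' _ => ?_
    have : Pmat τ πm s' s = ∑ a, pol s' a * τ s' a s := rfl
    rw [this, Finset.mul_sum]
    refine Finset.sum_congr rfl fun a _ => ?_
    rw [hm_eq s' a]; ring
  have hμsocc : μ = socc τ ι γ πm := socc_flow_eq hτ hι hγ0 hγ1 πm μ hμflow
  refine ⟨πm, ?_⟩
  funext p
  obtain ⟨s, a⟩ := p
  show socc τ ι γ πm s * pol s a = m (s, a)
  rw [hm_eq s a, ← hμsocc]; ring

noncomputable def unifPol (S A : Type) [Fintype A] [Nonempty A] : Policy S A :=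
  ⟨fun _ _ => (Fintype.card A : ℝ)⁻¹, by
    intro s
    have hcA : (0:ℝ) < (Fintype.card A : ℝ) := by
      have := Fintype.card_pos (α := A); positivity
    constructor
    · intro a; positivity
    · simp [Finset.card_univ]⟩

lemma pos_pos_of_mul_pos {a b : ℝ} (ha : 0 ≤ a) (hb : 0 ≤ b) (h : 0 < a * b) :
    0 < a ∧ 0 < b := by
  rcases mul_pos_iff.mp h with ⟨h1, h2⟩ | ⟨h1, h2⟩
  · exact ⟨h1, h2⟩
  · linarith

lemma stateDist_transfer (hτ : ∀ s a, IsProbVec (τ s a)) (hι : IsProbVec ι)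
    (π : Policy S A) (t : ℕ) (s : S) (h : 0 < stateDist τ ι π t s) :
    0 < stateDist τ ι (unifPol S A) t s := by
  induction t generalizing s with
  | zero => rw [stateDist_zero] at h ⊢; exact h
  | succ t ih =>
    rw [stateDist_succ] at h
    have hex : ∃ s', 0 < stateDist τ ι π t s' * Pmat τ π s' s := by
      by_contra hc
      push_neg at hc
      have : ∑ s', stateDist τ ι π t s' * Pmat τ π s' s ≤ 0 :=
        Finset.sum_nonpos fun s' _ => hc s'
      linarith
    obtain ⟨s', hs'⟩ := hex
    have h1 := pos_pos_of_mul_pos (stateDist_nonneg hτ hι π t s') (Pmat_nonneg hτ π s' s) hs'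
    have hPu : 0 < Pmat τ (unifPol S A) s' s := by
      have hex2 : ∃ a, 0 < π.1 s' a * τ s' a s := by
        by_contra hc
        push_neg at hc
        have : Pmat τ π s' s ≤ 0 := Finset.sum_nonpos fun a _ => hc a
        linarith [h1.2]
      obtain ⟨a, ha⟩ := hex2
      have h2 := pos_pos_of_mul_pos ((π.2 s').1 a) ((hτ s' a).1 s) ha
      have hcA : (0:ℝ) < (Fintype.card A : ℝ) := by
        have := Fintype.card_pos (α := A); positivity
      have hterm : 0 < (Fintype.card A : ℝ)⁻¹ * τ s' a s :=
        mul_pos (inv_pos.mpr hcA) h2.2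
      have : (Fintype.card A : ℝ)⁻¹ * τ s' a s ≤ Pmat τ (unifPol S A) s' s := by
        refine Finset.single_le_sum (f := fun a => (Fintype.card A : ℝ)⁻¹ * τ s' a s)
          (fun a' _ => mul_nonneg (inv_nonneg.mpr hcA.le) ((hτ s' a').1 s))
          (Finset.mem_univ a)
      linarith
    have hu := ih s' h1.1
    rw [stateDist_succ]
    have hterm : 0 < stateDist τ ι (unifPol S A) t s' * Pmat τ (unifPol S A) s' s :=
      mul_pos hu hPu
    have : stateDist τ ι (unifPol S A) t s' * Pmat τ (unifPol S A) s' s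
        ≤ ∑ x, stateDist τ ι (unifPol S A) t x * Pmat τ (unifPol S A) x s := by
      refine Finset.single_le_sum (fun x _ => mul_nonneg (stateDist_nonneg hτ hι _ t x)
        (Pmat_nonneg hτ _ x s)) (Finset.mem_univ s')
    linarith

lemma occ_unif_pos (hτ : ∀ s a, IsProbVec (τ s a)) (hι : IsProbVec ι)
    (hγ0 : 0 < γ) (hγ1 : γ < 1)
    (hreach : ∀ s : S, ∃ (π : Policy S A) (t : ℕ), 0 < stateDist τ ι π t s)
    (p : S × A) : 0 < occ τ ι γ (unifPol S A) p := by
  obtain ⟨π, t, hpos⟩ := hreach p.1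
  have hs := socc_pos hτ hι hγ0 hγ1 (unifPol S A) t p.1 (stateDist_transfer hτ hι π t p.1 hpos)
  have hcA : (0:ℝ) < (Fintype.card A : ℝ) := by
    have := Fintype.card_pos (α := A); positivity
  have : occ τ ι γ (unifPol S A) p = socc τ ι γ (unifPol S A) p.1 * (Fintype.card A : ℝ)⁻¹ := rfl
  rw [this]
  positivity

end Aux3

section Aux4
variable {S A : Type} [Fintype S] [DecidableEq S] [Fintype A] [Nonempty S] [Nonempty A]
variable {τ : S → A → S → ℝ} {γ : ℝ}

lemma ortho_potential (q : S × A → ℝ)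
    (hq : ∀ z : S × A → ℝ,
        (∀ s, ∑ a, z (s, a) = γ * ∑ p : S × A, z p * τ p.1 p.2 s) →
        ∑ p : S × A, z p * q p = 0) :
    ∃ Φ : S → ℝ, ∀ s a, q (s, a) = Φ s - γ * ∑ s', τ s a s' * Φ s' := by
  classical
  let T : EuclideanSpace ℝ S →ₗ[ℝ] EuclideanSpace ℝ (S × A) :=
    { toFun := fun Φ => (WithLp.equiv 2 (S × A → ℝ)).symm
        (fun p => Φ p.1 - γ * ∑ s', τ p.1 p.2 s' * Φ s')
      map_add' := by
        intro Φ Ψ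
        ext p
        show (Φ + Ψ) p.1 - γ * ∑ s', τ p.1 p.2 s' * (Φ + Ψ) s'
            = (Φ p.1 - γ * ∑ s', τ p.1 p.2 s' * Φ s')
              + (Ψ p.1 - γ * ∑ s', τ p.1 p.2 s' * Ψ s')
        simp only [PiLp.add_apply]
        have h : ∀ s', τ p.1 p.2 s' * (Φ s' + Ψ s')
            = τ p.1 p.2 s' * Φ s' + τ p.1 p.2 s' * Ψ s' := fun s' => by ring
        simp_rw [h, Finset.sum_add_distrib]
        ring
      map_smul' := by
        intro c Φ
        ext p
        show (c • Φ) p.1 - γ * ∑ s', τ p.1 p.2 s' * (c • Φ) s'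
            = c * (Φ p.1 - γ * ∑ s', τ p.1 p.2 s' * Φ s')
        simp only [PiLp.smul_apply, smul_eq_mul]
        have h : ∀ s', τ p.1 p.2 s' * (c * Φ s') = c * (τ p.1 p.2 s' * Φ s') := fun s' => by ring
        simp_rw [h, ← Finset.mul_sum]
        ring }
  set W : Submodule ℝ (EuclideanSpace ℝ (S × A)) := LinearMap.range T with hW
  set qE : EuclideanSpace ℝ (S × A) := (WithLp.equiv 2 (S × A → ℝ)).symm q with hqE
  have hqW : qE ∈ W := by
    rw [← Submodule.orthogonal_orthogonal W]
    rw [Submodule.mem_orthogonal]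
    intro z hz
    rw [Submodule.mem_orthogonal] at hz
    set zf : S × A → ℝ := (WithLp.equiv 2 (S × A → ℝ)) z with hzf0
    have hzf : ∀ s, ∑ a, zf (s, a) = γ * ∑ p : S × A, zf p * τ p.1 p.2 s := by
      intro s
      have h1 := hz (T ((WithLp.equiv 2 (S → ℝ)).symm (fun s' => if s' = s then 1 else 0)))
        (LinearMap.mem_range_self T _)
      rw [PiLp.inner_apply] at h1
      simp only [RCLike.inner_apply, conj_trivial] at h1
      have h2 : ∀ p : S × A,
          z p * (T ((WithLp.equiv 2 (S → ℝ)).symm (fun s' => if s' = s then 1 else 0))) p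
          = (if p.1 = s then zf p else 0) - γ * (τ p.1 p.2 s * zf p) := by
        intro p
        show zf p * ((if p.1 = s then (1:ℝ) else 0)
            - γ * ∑ s', τ p.1 p.2 s' * (if s' = s then (1:ℝ) else 0)) = _
        have h3 : ∀ s', τ p.1 p.2 s' * (if s' = s then (1:ℝ) else 0)
            = if s' = s then τ p.1 p.2 s' else 0 := fun s' => by split <;> ring
        simp_rw [h3]
        rw [Finset.sum_ite_eq' Finset.univ s (fun s' => τ p.1 p.2 s')]
        simp only [Finset.mem_univ, if_true]
        split <;> ring
      simp_rw [h2] at h1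
      rw [Finset.sum_sub_distrib] at h1
      have e1 : ∑ p : S × A, (if p.1 = s then zf p else 0) = ∑ a, zf (s, a) := by
        rw [show (∑ p : S × A, (if p.1 = s then zf p else 0))
            = ∑ s', ∑ a, (if s' = s then zf (s', a) else 0) from Fintype.sum_prod_type _]
        have h4 : ∀ s', ∑ a, (if s' = s then zf (s', a) else 0)
            = if s' = s then ∑ a, zf (s', a) else 0 := by
          intro s'; split <;> simp
        simp_rw [h4]
        rw [Finset.sum_ite_eq' Finset.univ s (fun s' => ∑ a, zf (s', a))]
        simp
      have e2 : ∑ p : S × A, γ * (τ p.1 p.2 s * zf p)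
          = γ * ∑ p : S × A, zf p * τ p.1 p.2 s := by
        rw [Finset.mul_sum]
        exact Finset.sum_congr rfl fun p _ => by ring
      rw [e1, e2] at h1
      linarith
    have := hq zf hzf
    rw [PiLp.inner_apply]
    simp only [RCLike.inner_apply, conj_trivial]
    rw [← this]
    exact Finset.sum_congr rfl fun p _ => mul_comm _ _
  obtain ⟨Φ, hΦ⟩ := hqW
  refine ⟨Φ, fun s a => ?_⟩
  have := congrFun (congrArg (WithLp.equiv 2 (S × A → ℝ)) hΦ) (s, a)
  exact this.symm

end Aux4

section Aux5
variable {S A : Type} [Fintype S] [DecidableEq S] [Fintype A] [Nonempty S] [Nonempty A]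
variable {τ : S → A → S → ℝ} {ι : S → ℝ} {γ : ℝ}

variable (hτ : ∀ s a, IsProbVec (τ s a)) (hι : IsProbVec ι) (hγ0 : 0 < γ) (hγ1 : γ < 1)
include hτ hι hγ0 hγ1

/-- If the linear functional `m ↦ ⟨m, q⟩` is constant on occupancy measures,
then `q` is a potential-shaping vector. -/
lemma const_J_potential
    (hreach : ∀ s : S, ∃ (π : Policy S A) (t : ℕ), 0 < stateDist τ ι π t s)
    (q : S × A → ℝ)
    (hconst : ∀ π : Policy S A,
      ∑ p : S × A, occ τ ι γ π p * q p = ∑ p : S × A, occ τ ι γ (unifPol S A) p * q p) :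
    ∃ Φ : S → ℝ, ∀ s a, q (s, a) = Φ s - γ * ∑ s', τ s a s' * Φ s' := by
  classical
  apply ortho_potential
  intro z hz
  set m₀ : S × A → ℝ := occ τ ι γ (unifPol S A) with hm₀
  have hm₀pos : ∀ p, 0 < m₀ p := occ_unif_pos hτ hι hγ0 hγ1 hreach
  -- choose ε > 0 with m₀ + ε z ≥ 0
  obtain ⟨p₀, _, hp₀⟩ := Finset.exists_min_image Finset.univ m₀ ⟨(Classical.arbitrary (S × A)),
    Finset.mem_univ _⟩
  set δ : ℝ := m₀ p₀ with hδ
  have hδpos : 0 < δ := hm₀pos p₀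
  set B : ℝ := (∑ p : S × A, |z p|) + 1 with hB
  have hBpos : 0 < B := by
    have : 0 ≤ ∑ p : S × A, |z p| := Finset.sum_nonneg fun p _ => abs_nonneg _
    linarith
  set ε : ℝ := δ / B with hε
  have hεpos : 0 < ε := div_pos hδpos hBpos
  have hbound : ∀ p, ε * |z p| ≤ δ := by
    intro p
    have h1 : |z p| ≤ B := by
      have : |z p| ≤ ∑ p' : S × A, |z p'| :=
        Finset.single_le_sum (fun p' _ => abs_nonneg (z p')) (Finset.mem_univ p)
      linarith
    calc ε * |z p| ≤ ε * B := mul_le_mul_of_nonneg_left h1 hεpos.le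
      _ = δ := by
          rw [hε, div_mul_cancel₀ _ (ne_of_gt hBpos)]
  set m : S × A → ℝ := fun p => m₀ p + ε * z p with hm
  have hm0 : ∀ p, 0 ≤ m p := by
    intro p
    have h1 : ε * |z p| ≤ δ := hbound p
    have h2 : δ ≤ m₀ p := hp₀ p (Finset.mem_univ p)
    have h3 : -(ε * |z p|) ≤ ε * z p := by
      have := neg_abs_le (z p)
      nlinarith
    simp only [hm]
    linarith
  have hmflow : ∀ s, ∑ a, m (s, a) = ι s + γ * ∑ p : S × A, m p * τ p.1 p.2 s := by
    intro s
    simp only [hm]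
    rw [Finset.sum_add_distrib]
    have e1 : ∑ a, ε * z (s, a) = ε * ∑ a, z (s, a) := by rw [Finset.mul_sum]
    rw [e1, occ_flow hτ hι hγ0 hγ1, hz s]
    have e2 : ∀ p : S × A, (m₀ p + ε * z p) * τ p.1 p.2 s
        = m₀ p * τ p.1 p.2 s + ε * (z p * τ p.1 p.2 s) := fun p => by ring
    simp_rw [e2, Finset.sum_add_distrib]
    rw [← Finset.mul_sum]
    ring
  obtain ⟨π₁, hπ₁⟩ := occ_realize hτ hι hγ0 hγ1 m hm0 hmflow
  have h1 := hconst π₁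
  rw [hπ₁] at h1
  have h2 : ∑ p : S × A, m p * q p
      = ∑ p : S × A, m₀ p * q p + ε * ∑ p : S × A, z p * q p := by
    simp only [hm]
    rw [Finset.mul_sum, ← Finset.sum_add_distrib]
    exact Finset.sum_congr rfl fun p _ => by ring
  rw [h2] at h1
  have : ε * ∑ p : S × A, z p * q p = 0 := by linarith
  rcases mul_eq_zero.mp this with h | h
  · exact absurd h (ne_of_gt hεpos)
  · exact h

/-- Mixability: occupancy measures are convex, giving simultaneous affine interpolation of `Jval`. -/
lemma mix_policy (π π' : Policy S A) (l : ℝ) (hl0 : 0 ≤ l) (hl1 : l ≤ 1) :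
    ∃ π'' : Policy S A, ∀ R : S → A → S → ℝ,
      Jval τ ι γ R π'' = l * Jval τ ι γ R π + (1 - l) * Jval τ ι γ R π' := by
  set m : S × A → ℝ := fun p => l * occ τ ι γ π p + (1 - l) * occ τ ι γ π' p with hm
  have hm0 : ∀ p, 0 ≤ m p := fun p => add_nonneg
    (mul_nonneg hl0 (occ_nonneg hτ hι hγ0 hγ1 π p))
    (mul_nonneg (by linarith) (occ_nonneg hτ hι hγ0 hγ1 π' p))
  have hmflow : ∀ s, ∑ a, m (s, a) = ι s + γ * ∑ p : S × A, m p * τ p.1 p.2 s := by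
    intro s
    simp only [hm]
    rw [Finset.sum_add_distrib, ← Finset.mul_sum, ← Finset.mul_sum,
      occ_flow hτ hι hγ0 hγ1 π s, occ_flow hτ hι hγ0 hγ1 π' s]
    have e2 : ∀ p : S × A, (l * occ τ ι γ π p + (1 - l) * occ τ ι γ π' p) * τ p.1 p.2 s
        = l * (occ τ ι γ π p * τ p.1 p.2 s) + (1 - l) * (occ τ ι γ π' p * τ p.1 p.2 s) :=
      fun p => by ring
    simp_rw [e2, Finset.sum_add_distrib, ← Finset.mul_sum]
    ring
  obtain ⟨π'', hπ''⟩ := occ_realize hτ hι hγ0 hγ1 m hm0 hmflow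
  refine ⟨π'', fun R => ?_⟩
  rw [Jval_eq_occ hτ hι hγ0 hγ1, Jval_eq_occ hτ hι hγ0 hγ1, Jval_eq_occ hτ hι hγ0 hγ1, hπ'']
  simp only [hm]
  rw [Finset.mul_sum, Finset.mul_sum, ← Finset.sum_add_distrib]
  exact Finset.sum_congr rfl fun p _ => by ring

end Aux5

section Aux6

/-- Two functions to `ℝ` with the same strict ordering and simultaneous affine mixability
are related by a positive affine transformation. -/
lemma affine_of_ord {P : Type*} (f g : P → ℝ)
    (hord : ∀ π π' : P, f π' < f π ↔ g π' < g π)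
    (hmix : ∀ (π π' : P) (l : ℝ), 0 ≤ l → l ≤ 1 →
      ∃ π'' : P, f π'' = l * f π + (1 - l) * f π' ∧ g π'' = l * g π + (1 - l) * g π')
    (πa πb : P) (hab : f πb < f πa) (π : P) :
    g π = (g πa - g πb) / (f πa - f πb) * (f π - f πa) + g πa := by
  have heq : ∀ π π' : P, f π = f π' → g π = g π' := by
    intro π π' h
    have h1 : ¬ g π' < g π := fun hc => absurd ((hord π π').mpr hc) (by rw [h]; exact lt_irrefl _)
    have h2 : ¬ g π < g π' := fun hc => absurd ((hord π' π).mpr hc) (by rw [h]; exact lt_irrefl _)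
    linarith [not_lt.mp h1, not_lt.mp h2]
  set xa := f πa with hxa
  set xb := f πb with hxb
  set ya := g πa with hya
  set yb := g πb with hyb
  set x := f π with hx
  set c := (ya - yb) / (xa - xb) with hc
  have hyab : yb < ya := (hord πa πb).mp hab
  have hden : (0:ℝ) < xa - xb := by linarith
  rcases lt_trichotomy x xb with hcase | hcase | hcase
  · -- x < xb : πb is a mixture of πa and π
    have hden2 : (0:ℝ) < xa - x := by linarith
    set l := (xb - x) / (xa - x) with hl
    have hl0 : 0 < l := div_pos (by linarith) hden2
    have hl1 : l < 1 := by rw [hl, div_lt_one hden2]; linarith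
    obtain ⟨π'', hf'', hg''⟩ := hmix πa π l hl0.le hl1.le
    have hfx : f π'' = xb := by
      rw [hf'', hl]; field_simp; ring
    have hgb : g π'' = yb := heq π'' πb hfx
    have key : yb = l * ya + (1 - l) * g π := by rw [← hgb, hg'']
    have expand : yb - l * ya = (1 - l) * (c * (x - xa) + ya) := by
      rw [hl, hc]; field_simp; ring
    have h5 : (1 - l) * g π = (1 - l) * (c * (x - xa) + ya) := by linarith
    have hne : (1:ℝ) - l ≠ 0 := by linarith
    exact mul_left_cancel₀ hne h5
  · -- x = xb
    have : g π = yb := heq π πb hcase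
    rw [this, hcase, hc]; field_simp; ring
  · rcases lt_trichotomy x xa with hcase2 | hcase2 | hcase2
    · -- xb < x < xa : π has the same f-value as a mixture of πa and πb
      set l := (x - xb) / (xa - xb) with hl
      have hl0 : 0 < l := div_pos (by linarith) hden
      have hl1 : l < 1 := by rw [hl, div_lt_one hden]; linarith
      obtain ⟨π'', hf'', hg''⟩ := hmix πa πb l hl0.le hl1.le
      have hfx : f π'' = x := by rw [hf'', hl]; field_simp; ring
      have hgx : g π = g π'' := heq π π'' hfx.symm
      rw [hgx, hg'', hl, hc]; field_simp; ring
    · -- x = xa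
      have : g π = ya := heq π πa hcase2
      rw [this, hcase2]; ring
    · -- xa < x : πa is a mixture of π and πb
      have hden2 : (0:ℝ) < x - xb := by linarith
      set l := (xa - xb) / (x - xb) with hl
      have hl0 : 0 < l := div_pos (by linarith) hden2
      have hl1 : l < 1 := by rw [hl, div_lt_one hden2]; linarith
      obtain ⟨π'', hf'', hg''⟩ := hmix π πb l hl0.le hl1.le
      have hfx : f π'' = xa := by rw [hf'', hl]; field_simp; ring
      have hga : g π'' = ya := heq π'' πa hfx
      have key : ya = l * g π + (1 - l) * yb := by rw [← hga, hg'']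
      have expand : ya - (1 - l) * yb = l * (c * (x - xa) + ya) := by
        rw [hl, hc]; field_simp; ring
      have h5 : l * g π = l * (c * (x - xa) + ya) := by linarith
      exact mul_left_cancel₀ (ne_of_gt hl0) h5

end Aux6

section Aux7
variable {S A : Type} [Fintype S] [DecidableEq S] [Fintype A] [Nonempty S] [Nonempty A]
variable {τ : S → A → S → ℝ} {ι : S → ℝ} {γ : ℝ}

variable (hτ : ∀ s a, IsProbVec (τ s a)) (hι : IsProbVec ι) (hγ0 : 0 < γ) (hγ1 : γ < 1)
include hτ hι hγ0 hγ1

/-- Expected value of a potential-shaping term against any occupancy measure is a constant. -/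
lemma occ_shaping (Φ : S → ℝ) (π : Policy S A) :
    ∑ p : S × A, occ τ ι γ π p * (γ * (∑ s', τ p.1 p.2 s' * Φ s') - Φ p.1)
      = -∑ s, ι s * Φ s := by
  have e0 : ∀ p : S × A, occ τ ι γ π p * (γ * (∑ s', τ p.1 p.2 s' * Φ s') - Φ p.1)
      = (∑ s', γ * (occ τ ι γ π p * τ p.1 p.2 s') * Φ s') - occ τ ι γ π p * Φ p.1 := by
    intro p
    rw [mul_sub, Finset.mul_sum, Finset.mul_sum]
    congr 1
    exact Finset.sum_congr rfl fun s' _ => by ring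
  simp_rw [e0]
  rw [Finset.sum_sub_distrib]
  have hA : ∑ p : S × A, ∑ s', γ * (occ τ ι γ π p * τ p.1 p.2 s') * Φ s'
      = ∑ s', (γ * ∑ p : S × A, occ τ ι γ π p * τ p.1 p.2 s') * Φ s' := by
    rw [Finset.sum_comm]
    refine Finset.sum_congr rfl fun s' _ => ?_
    rw [Finset.mul_sum, Finset.sum_mul]
  have hB : ∑ p : S × A, occ τ ι γ π p * Φ p.1
      = ∑ s', (∑ a, occ τ ι γ π (s', a)) * Φ s' := by
    rw [show (∑ p : S × A, occ τ ι γ π p * Φ p.1)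
        = ∑ s', ∑ a, occ τ ι γ π (s', a) * Φ s' from Fintype.sum_prod_type _]
    refine Finset.sum_congr rfl fun s' _ => by rw [Finset.sum_mul]
  rw [hA, hB]
  have hflow : ∀ s', γ * ∑ p : S × A, occ τ ι γ π p * τ p.1 p.2 s'
      = (∑ a, occ τ ι γ π (s', a)) - ι s' := by
    intro s'
    have := occ_flow hτ hι hγ0 hγ1 π s'
    linarith
  simp_rw [hflow]
  rw [← Finset.sum_sub_distrib, ← Finset.sum_neg_distrib]
  refine Finset.sum_congr rfl fun s _ => by ring

/-- If the expected rewards are related by scaling and shaping, `Jval` is related affinely. -/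
lemma Jval_affine (c : ℝ) (Φ : S → ℝ) (R₁ R₂ : S → A → S → ℝ)
    (h : ∀ s a, qfun τ R₂ (s, a)
      = c * qfun τ R₁ (s, a) + (γ * (∑ s', τ s a s' * Φ s') - Φ s))
    (π : Policy S A) :
    Jval τ ι γ R₂ π = c * Jval τ ι γ R₁ π - ∑ s, ι s * Φ s := by
  rw [Jval_eq_occ hτ hι hγ0 hγ1, Jval_eq_occ hτ hι hγ0 hγ1]
  have e : ∀ p : S × A, occ τ ι γ π p * qfun τ R₂ p
      = c * (occ τ ι γ π p * qfun τ R₁ p)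
        + occ τ ι γ π p * (γ * (∑ s', τ p.1 p.2 s' * Φ s') - Φ p.1) := by
    intro p
    rw [show qfun τ R₂ p = qfun τ R₂ (p.1, p.2) from rfl, h p.1 p.2]
    ring
  simp_rw [e]
  rw [Finset.sum_add_distrib, ← Finset.mul_sum, occ_shaping hτ hι hγ0 hγ1]
  ring

end Aux7

theorem stmt_7 {S A : Type} [Fintype S] [DecidableEq S] [Fintype A]
    [Nonempty S] [Nonempty A]
    (τ : S → A → S → ℝ) (hτ : ∀ s a, IsProbVec (τ s a))
    (ι : S → ℝ) (hι : IsProbVec ι)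
    (γ : ℝ) (hγ0 : 0 < γ) (hγ1 : γ < 1)
    (hreach : AllReachable τ ι)
    (R₁ R₂ : S → A → S → ℝ) :
    EquivORD τ ι γ R₁ R₂ ↔
      ∃ c : ℝ, 0 < c ∧ ∃ Φ : S → ℝ, ∀ s a,
        ∑ s', τ s a s' * R₂ s a s' =
          (∑ s', τ s a s' * (c * R₁ s a s' + γ * Φ s')) - Φ s := by
  constructor
  · intro hord
    classical
    have hord' : ∀ π π' : Policy S A,
        Jval τ ι γ R₁ π' < Jval τ ι γ R₁ π ↔ Jval τ ι γ R₂ π' < Jval τ ι γ R₂ π := hord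
    have hmix : ∀ (π π' : Policy S A) (l : ℝ), 0 ≤ l → l ≤ 1 →
        ∃ π'' : Policy S A,
          Jval τ ι γ R₁ π'' = l * Jval τ ι γ R₁ π + (1 - l) * Jval τ ι γ R₁ π' ∧
          Jval τ ι γ R₂ π'' = l * Jval τ ι γ R₂ π + (1 - l) * Jval τ ι γ R₂ π' := by
      intro π π' l hl0 hl1
      obtain ⟨π'', h⟩ := mix_policy hτ hι hγ0 hγ1 π π' l hl0 hl1
      exact ⟨π'', h R₁, h R₂⟩
    have hkey : ∃ c : ℝ, 0 < c ∧ ∀ π : Policy S A,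
        Jval τ ι γ R₂ π - c * Jval τ ι γ R₁ π
          = Jval τ ι γ R₂ (unifPol S A) - c * Jval τ ι γ R₁ (unifPol S A) := by
      by_cases hne : ∃ πa πb : Policy S A, Jval τ ι γ R₁ πb < Jval τ ι γ R₁ πa
      · obtain ⟨πa, πb, hab⟩ := hne
        have hyab : Jval τ ι γ R₂ πb < Jval τ ι γ R₂ πa := (hord' πa πb).mp hab
        refine ⟨(Jval τ ι γ R₂ πa - Jval τ ι γ R₂ πb)
          / (Jval τ ι γ R₁ πa - Jval τ ι γ R₁ πb),
          div_pos (by linarith) (by linarith), fun π => ?_⟩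
        have h1 := affine_of_ord (Jval τ ι γ R₁) (Jval τ ι γ R₂) hord' hmix πa πb hab π
        have h2 := affine_of_ord (Jval τ ι γ R₁) (Jval τ ι γ R₂) hord' hmix πa πb hab
          (unifPol S A)
        rw [h1, h2]; ring
      · push_neg at hne
        refine ⟨1, one_pos, fun π => ?_⟩
        have hfeq : Jval τ ι γ R₁ π = Jval τ ι γ R₁ (unifPol S A) :=
          le_antisymm (hne _ _) (hne _ _)
        have h1 : ¬ Jval τ ι γ R₂ (unifPol S A) < Jval τ ι γ R₂ π := fun hc =>
          absurd ((hord' π (unifPol S A)).mpr hc) (not_lt.mpr (hne _ _))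
        have h2 : ¬ Jval τ ι γ R₂ π < Jval τ ι γ R₂ (unifPol S A) := fun hc =>
          absurd ((hord' (unifPol S A) π).mpr hc) (not_lt.mpr (hne _ _))
        have hgeq : Jval τ ι γ R₂ π = Jval τ ι γ R₂ (unifPol S A) := by
          linarith [not_lt.mp h1, not_lt.mp h2]
        rw [hfeq, hgeq]
    obtain ⟨c, hc, hconstJ⟩ := hkey
    set qd : S × A → ℝ := fun p => qfun τ R₂ p - c * qfun τ R₁ p with hqd
    have e : ∀ π : Policy S A, ∑ p : S × A, occ τ ι γ π p * qd p
        = Jval τ ι γ R₂ π - c * Jval τ ι γ R₁ π := by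
      intro π
      rw [Jval_eq_occ hτ hι hγ0 hγ1, Jval_eq_occ hτ hι hγ0 hγ1,
        Finset.mul_sum, ← Finset.sum_sub_distrib]
      exact Finset.sum_congr rfl fun p _ => by simp only [hqd]; ring
    have hconst : ∀ π : Policy S A,
        ∑ p : S × A, occ τ ι γ π p * qd p
          = ∑ p : S × A, occ τ ι γ (unifPol S A) p * qd p := by
      intro π
      rw [e π, e (unifPol S A), hconstJ π]
    obtain ⟨Φ', hΦ'⟩ := const_J_potential hτ hι hγ0 hγ1 hreach qd hconst
    refine ⟨c, hc, fun s => -Φ' s, fun s a => ?_⟩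
    have e2 : ∑ s', τ s a s' * (c * R₁ s a s' + γ * (-Φ' s'))
        = c * qfun τ R₁ (s, a) - γ * ∑ s', τ s a s' * Φ' s' := by
      rw [show qfun τ R₁ (s, a) = ∑ s', τ s a s' * R₁ s a s' from rfl,
        Finset.mul_sum, Finset.mul_sum, ← Finset.sum_sub_distrib]
      exact Finset.sum_congr rfl fun s' _ => by ring
    rw [e2]
    have h2 : qfun τ R₂ (s, a)
        = c * qfun τ R₁ (s, a) + (Φ' s - γ * ∑ s', τ s a s' * Φ' s') := by
      have h3 := hΦ' s a
      simp only [hqd] at h3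
      linarith
    show qfun τ R₂ (s, a) = _
    rw [h2]; ring
  · rintro ⟨c, hc, Φ, hΦ⟩
    have hq : ∀ s a, qfun τ R₂ (s, a)
        = c * qfun τ R₁ (s, a) + (γ * (∑ s', τ s a s' * Φ s') - Φ s) := by
      intro s a
      have h1 := hΦ s a
      have e : ∑ s', τ s a s' * (c * R₁ s a s' + γ * Φ s')
          = c * qfun τ R₁ (s, a) + γ * ∑ s', τ s a s' * Φ s' := by
        rw [show qfun τ R₁ (s, a) = ∑ s', τ s a s' * R₁ s a s' from rfl,
          Finset.mul_sum, Finset.mul_sum, ← Finset.sum_add_distrib]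
        exact Finset.sum_congr rfl fun s' _ => by ring
      show (∑ s', τ s a s' * R₂ s a s') = _
      rw [h1, e]; ring
    intro π π'
    have h1 := Jval_affine hτ hι hγ0 hγ1 c Φ R₁ R₂ hq π
    have h2 := Jval_affine hτ hι hγ0 hγ1 c Φ R₁ R₂ hq π'
    rw [h1, h2]
    constructor
    · intro h; nlinarith
    · intro h; nlinarith
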